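/- Let G be a finite group of order n and ψ a normalized binary cocycle on G (ψ(1,g) = ψ(g,1) = 1 for all g). The cocyclic matrix M_ψ satisfies M_ψ·M_ψ^T = n·I (i.e., M_ψ is Hadamard) if and only if for every g ≠ 1 in G, the row sum Σ_{h ∈ G} ψ(g, h) equals 0. -/

import Mathlib

open Matrix Finset

theorem stmt_11 (G : Type*) [Group G] [Fintype G] [DecidableEq G]
    (ψ : G → G → ℝ)
    (hpm : ∀ g h, ψ g h = 1 ∨ ψ g h = -1)
    (hcoc : ∀ g h k : G, ψ g h * ψ (g * h) k = ψ h k * ψ g (h * k))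
    (hnorm : ∀ g : G, ψ 1 g = 1 ∧ ψ g 1 = 1) :
    (Matrix.of ψ) * (Matrix.of ψ)ᵀ
        = (Fintype.card G : ℝ) • (1 : Matrix G G ℝ)
      ↔ ∀ g : G, g ≠ 1 → ∑ h : G, ψ g h = 0 := by
  have key : ∀ a b h : G, ψ a h * ψ b h = ψ (a * b⁻¹) b * ψ (a * b⁻¹) (b * h) := by
    intro a b h
    have hc := hcoc (a * b⁻¹) b h
    rw [inv_mul_cancel_right] at hc
    rcases hpm (a * b⁻¹) b with h1 | h1 <;>
      rcases hpm a h with h2 | h2 <;>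
      rcases hpm b h with h3 | h3 <;>
      rcases hpm (a * b⁻¹) (b * h) with h4 | h4 <;>
      rw [h1, h2, h3, h4] at hc ⊢ <;> norm_num at hc <;> norm_num
  have entry : ∀ a b : G, ∑ h : G, ψ a h * ψ b h
      = ψ (a * b⁻¹) b * ∑ h : G, ψ (a * b⁻¹) h := by
    intro a b
    have : ∑ h : G, ψ (a * b⁻¹) (b * h) = ∑ h : G, ψ (a * b⁻¹) h :=
      Fintype.sum_bijective (fun h => b * h) (Group.mulLeft_bijective b) _ _ (fun _ => rfl)
    rw [← this, mul_sum]
    exact Finset.sum_congr rfl fun h _ => key a b h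
  constructor
  · intro hM g hg
    have := congrFun (congrFun hM g) 1
    simp only [Matrix.mul_apply, Matrix.transpose_apply, Matrix.of_apply,
      Matrix.smul_apply, Matrix.one_apply, hg, if_neg hg, smul_zero] at this
    have h1 : ∀ h : G, ψ 1 h = 1 := fun h => (hnorm h).1
    simpa [h1] using this
  · intro hS
    ext a b
    rw [Matrix.mul_apply]
    simp only [Matrix.transpose_apply, Matrix.of_apply, Matrix.smul_apply,
      Matrix.one_apply]
    by_cases hab : a = b
    · subst hab
      simp only [if_pos rfl, smul_eq_mul, mul_one]
      have : ∀ h : G, ψ a h * ψ a h = 1 := by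
        intro h; rcases hpm a h with h1 | h1 <;> rw [h1] <;> norm_num
      simp [this, Finset.card_univ]
    · rw [if_neg hab, smul_zero, entry]
      have hne : a * b⁻¹ ≠ 1 := by
        intro h; exact hab (by rwa [mul_inv_eq_one] at h)
      rw [hS _ hne, mul_zero]
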